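/- For every integer n ≥ 2, the graph G obtained from the complete graph K_n by adding one new vertex joined by an edge to exactly one vertex of K_n satisfies γ×2(G) = γt(G) + γ(G) = 3; that is, the bound γ×2(G) ≤ γt(G) + γ(G) for claw-free graphs is attained with equality by these graphs. -/

import Mathlib

/-! Basic domination-type definitions for finite simple graphs. -/

variable {V : Type*}

/-- The closed neighbourhood `N[v] = N(v) ∪ {v}`. -/
def closedNbhd (G : SimpleGraph V) (v : V) : Set V := insert v (G.neighborSet v)

/-- `D` is a dominating set: every vertex outside `D` has a neighbour in `D`. -/
def IsDomSet (G : SimpleGraph V) (D : Set V) : Prop := ∀ v ∉ D, ∃ u ∈ D, G.Adj u v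

/-- `D` is a double dominating set: `|N[v] ∩ D| ≥ 2` for every vertex `v`. -/
def IsDoubleDomSet (G : SimpleGraph V) (D : Set V) : Prop :=
  ∀ v : V, 2 ≤ (closedNbhd G v ∩ D).ncard

/-- `D` is a 2-dominating set: every vertex outside `D` has ≥ 2 neighbours in `D`. -/
def IsTwoDomSet (G : SimpleGraph V) (D : Set V) : Prop :=
  ∀ v ∉ D, 2 ≤ (G.neighborSet v ∩ D).ncard

/-- `D` is a total dominating set: every vertex has a neighbour in `D`. -/
def IsTotalDomSet (G : SimpleGraph V) (D : Set V) : Prop := ∀ v : V, ∃ u ∈ D, G.Adj u v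

/-- `S` is an independent set: no two vertices of `S` are adjacent. -/
def IsIndepSet' (G : SimpleGraph V) (S : Set V) : Prop := ∀ u ∈ S, ∀ v ∈ S, ¬ G.Adj u v

/-- `C` is a vertex cover: every edge has an endpoint in `C`. -/
def IsVertexCover (G : SimpleGraph V) (C : Set V) : Prop := ∀ u v, G.Adj u v → u ∈ C ∨ v ∈ C

/-- The domination number `γ(G)`. -/
noncomputable def domNum (G : SimpleGraph V) : ℕ :=
  sInf {k | ∃ D : Set V, IsDomSet G D ∧ D.ncard = k}

/-- The double domination number `γ×2(G)`. -/
noncomputable def ddomNum (G : SimpleGraph V) : ℕ :=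
  sInf {k | ∃ D : Set V, IsDoubleDomSet G D ∧ D.ncard = k}

/-- The 2-domination number `γ₂(G)`. -/
noncomputable def twoDomNum (G : SimpleGraph V) : ℕ :=
  sInf {k | ∃ D : Set V, IsTwoDomSet G D ∧ D.ncard = k}

/-- The total domination number `γt(G)`. -/
noncomputable def totalDomNum (G : SimpleGraph V) : ℕ :=
  sInf {k | ∃ D : Set V, IsTotalDomSet G D ∧ D.ncard = k}

/-- The vertex cover number `β(G)`. -/
noncomputable def vcNum (G : SimpleGraph V) : ℕ :=
  sInf {k | ∃ C : Set V, IsVertexCover G C ∧ C.ncard = k}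

/-- The independence number `α(G)`. -/
noncomputable def indepNum (G : SimpleGraph V) : ℕ :=
  sSup {k | ∃ S : Set V, IsIndepSet' G S ∧ S.ncard = k}

/-- The independent domination number `i(G)`. -/
noncomputable def indepDomNum (G : SimpleGraph V) : ℕ :=
  sInf {k | ∃ S : Set V, IsIndepSet' G S ∧ IsDomSet G S ∧ S.ncard = k}

/-- The set of leaves (vertices of degree one). -/
def leafSet (G : SimpleGraph V) : Set V := {v | (G.neighborSet v).ncard = 1}

/-- The set of support vertices (vertices adjacent to a leaf). -/
def supportSet (G : SimpleGraph V) : Set V := {v | ∃ u, G.Adj v u ∧ u ∈ leafSet G}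

/-- The graph obtained from `K_n` (on the vertices `some i`) by adding one pendant
vertex `none` adjacent to exactly the vertex `some 0`. -/
def Kpend (n : ℕ) : SimpleGraph (Option (Fin n)) :=
  SimpleGraph.fromRel (fun x y =>
    (x ≠ none ∧ y ≠ none) ∨ (x = none ∧ ∃ i : Fin n, y = some i ∧ i.val = 0))


section Aux

lemma kadj_some_some (n : ℕ) (i j : Fin n) :
    (Kpend n).Adj (some i) (some j) ↔ i ≠ j := by
  simp [Kpend, SimpleGraph.fromRel_adj]

lemma kadj_none_some (n : ℕ) (i : Fin n) :
    (Kpend n).Adj none (some i) ↔ i.val = 0 := by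
  simp [Kpend, SimpleGraph.fromRel_adj]

lemma knbhd_none (n : ℕ) (hn : 0 < n) :
    (Kpend n).neighborSet none = {some ⟨0, hn⟩} := by
  ext x
  cases x with
  | none => simp [SimpleGraph.neighborSet]
  | some i =>
      simp only [SimpleGraph.mem_neighborSet, kadj_none_some, Set.mem_singleton_iff,
        Option.some.injEq]
      constructor
      · intro h; exact Fin.ext h
      · intro h; subst h; rfl

lemma two_le_ncard_of_pair {α : Type*} [Finite α] {s : Set α} {a b : α}
    (ha : a ∈ s) (hb : b ∈ s) (hab : a ≠ b) : 2 ≤ s.ncard := by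
  have : ({a, b} : Set α) ⊆ s := by
    intro x hx
    simp only [Set.mem_insert_iff, Set.mem_singleton_iff] at hx
    rcases hx with rfl | rfl
    · exact ha
    · exact hb
  calc 2 = ({a, b} : Set α).ncard := (Set.ncard_pair hab).symm
    _ ≤ s.ncard := Set.ncard_le_ncard this (Set.toFinite s)

end Aux

/-- For every `n ≥ 2`, the complete graph with a pendant edge satisfies
`γ×2(G) = γt(G) + γ(G) = 3`. -/
theorem stmt16 (n : ℕ) (hn : 2 ≤ n) :
    ddomNum (Kpend n) = totalDomNum (Kpend n) + domNum (Kpend n) ∧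
    totalDomNum (Kpend n) + domNum (Kpend n) = 3 := by
  have hn0 : 0 < n := by omega
  set z0 : Fin n := ⟨0, hn0⟩ with hz0
  set z1 : Fin n := ⟨1, by omega⟩ with hz1
  have hz01 : z0 ≠ z1 := by
    intro h; have := congrArg Fin.val h; simp [hz0, hz1] at this
  -- domination number = 1
  have hdom : domNum (Kpend n) = 1 := by
    have h1 : 1 ∈ {k | ∃ D : Set (Option (Fin n)), IsDomSet (Kpend n) D ∧ D.ncard = k} := by
      refine ⟨{some z0}, ?_, by simp⟩
      intro v hv
      refine ⟨some z0, rfl, ?_⟩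
      cases v with
      | none => exact ((Kpend n).adj_symm ((kadj_none_some n z0).2 rfl))
      | some i =>
          refine (kadj_some_some n z0 i).2 ?_
          intro h; exact hv (by simp [h])
    refine le_antisymm (Nat.sInf_le h1) ?_
    rw [Nat.one_le_iff_ne_zero]
    intro h0
    have := Nat.sInf_eq_zero.1 h0
    rcases this with h | h
    · obtain ⟨D, hD, hcard⟩ := h
      have hDe : D = ∅ := (Set.ncard_eq_zero (Set.toFinite D)).1 hcard
      subst hDe
      obtain ⟨u, hu, -⟩ := hD none (by simp)
      exact hu
    · rw [h] at h1; exact h1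
  -- total domination number = 2
  have htot : totalDomNum (Kpend n) = 2 := by
    have h2 : 2 ∈ {k | ∃ D : Set (Option (Fin n)), IsTotalDomSet (Kpend n) D ∧ D.ncard = k} := by
      refine ⟨{some z0, some z1}, ?_, ?_⟩
      · intro v
        cases v with
        | none =>
            exact ⟨some z0, by simp, (Kpend n).adj_symm ((kadj_none_some n z0).2 rfl)⟩
        | some i =>
            by_cases hi : i = z0
            · exact ⟨some z1, by simp, (kadj_some_some n z1 i).2 (by rw [hi]; exact hz01.symm)⟩
            · exact ⟨some z0, by simp, (kadj_some_some n z0 i).2 (fun h => hi h.symm)⟩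
      · rw [Set.ncard_pair (by simp [hz01])]
    refine le_antisymm (Nat.sInf_le h2) ?_
    refine le_csInf ⟨2, h2⟩ ?_
    rintro k ⟨D, hD, rfl⟩
    by_contra hlt
    push_neg at hlt
    interval_cases h : D.ncard
    · have hDe : D = ∅ := (Set.ncard_eq_zero (Set.toFinite D)).1 h
      obtain ⟨u, hu, -⟩ := hD none
      rw [hDe] at hu; exact hu
    · obtain ⟨a, rfl⟩ := (Set.ncard_eq_one).1 h
      obtain ⟨u, hu, hadj⟩ := hD a
      rw [Set.mem_singleton_iff] at hu
      subst hu
      exact (Kpend n).irrefl hadj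
  -- double domination number = 3
  have hdd : ddomNum (Kpend n) = 3 := by
    have h3 : 3 ∈ {k | ∃ D : Set (Option (Fin n)), IsDoubleDomSet (Kpend n) D ∧ D.ncard = k} := by
      refine ⟨{none, some z0, some z1}, ?_, ?_⟩
      · intro v
        cases v with
        | none =>
            refine two_le_ncard_of_pair (a := (none : Option (Fin n))) (b := some z0)
              ⟨by simp [closedNbhd], by simp⟩ ?_ (by simp)
            exact ⟨Set.mem_insert_iff.2 (Or.inr ((kadj_none_some n z0).2 rfl)), by simp⟩
        | some i =>
            refine two_le_ncard_of_pair (a := some z0) (b := some z1) ?_ ?_ (by simp [hz01])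
            · refine ⟨?_, by simp⟩
              by_cases hi : i = z0
              · exact Set.mem_insert_iff.2 (Or.inl (by rw [hi]))
              · exact Set.mem_insert_iff.2 (Or.inr ((Kpend n).adj_symm
                  ((kadj_some_some n z0 i).2 (fun h => hi h.symm))))
            · refine ⟨?_, by simp⟩
              by_cases hi : i = z1
              · exact Set.mem_insert_iff.2 (Or.inl (by rw [hi]))
              · exact Set.mem_insert_iff.2 (Or.inr ((Kpend n).adj_symm
                  ((kadj_some_some n z1 i).2 (fun h => hi h.symm))))
      · rw [Set.ncard_insert_of_notMem (by simp) (Set.toFinite _),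
          Set.ncard_pair (by simp [hz01])]
    refine le_antisymm (Nat.sInf_le h3) ?_
    refine le_csInf ⟨3, h3⟩ ?_
    rintro k ⟨D, hD, rfl⟩
    -- from vertex none : both none and some z0 are in D
    have hcnone : closedNbhd (Kpend n) none = {none, some z0} := by
      rw [closedNbhd, knbhd_none n hn0]
    have hsub : closedNbhd (Kpend n) none ∩ D ⊆ ({none, some z0} : Set (Option (Fin n))) := by
      rw [hcnone]; exact Set.inter_subset_left
    have h2n := hD none
    have heq : closedNbhd (Kpend n) none ∩ D = ({none, some z0} : Set (Option (Fin n))) := by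
      apply Set.eq_of_subset_of_ncard_le hsub ?_ (Set.toFinite _)
      rw [Set.ncard_pair (by simp)]
      exact h2n
    have hnoneD : (none : Option (Fin n)) ∈ D := by
      have : (none : Option (Fin n)) ∈ closedNbhd (Kpend n) none ∩ D := by
        rw [heq]; simp
      exact this.2
    -- from vertex some z1 : D \ {none} has at least 2 elements
    have h2z1 := hD (some z1)
    have hsub2 : closedNbhd (Kpend n) (some z1) ∩ D ⊆ D \ {none} := by
      rintro x ⟨hx1, hx2⟩
      refine ⟨hx2, ?_⟩
      simp only [Set.mem_singleton_iff]
      rintro rfl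
      rcases Set.mem_insert_iff.1 hx1 with h | h
      · exact nomatch h
      · rw [SimpleGraph.mem_neighborSet] at h
        have := ((Kpend n).adj_symm h)
        rw [kadj_none_some n z1] at this
        simp [hz1] at this
    have : 2 ≤ (D \ {none}).ncard :=
      le_trans h2z1 (Set.ncard_le_ncard hsub2 (Set.toFinite _))
    have hcard : D.ncard = (D \ {none}).ncard + 1 := by
      rw [Set.ncard_diff_singleton_add_one hnoneD (Set.toFinite D)]
    omega
  exact ⟨by rw [hdd, htot, hdom], by rw [htot, hdom]⟩
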